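/- arXiv:2005.14492 — 7 statements merged into one kernel-verified Lean document; each statement's English description precedes it below -/
import Mathlib

section
/- A function θ : S → T between inverse semigroups is a prehomomorphism if and only if it preserves the restricted product (if x⁻¹x = yy⁻¹ then θ(x)⁻¹θ(x) = θ(y)θ(y)⁻¹ and θ(xy) = θ(x)θ(y)) and preserves the natural partial order. -/
/-- An inverse semigroup: a semigroup with an involution-like inverse such that
`a * a⁻¹ * a = a`, `a⁻¹ * a * a⁻¹ = a⁻¹`, and idempotents commute. -/
class InverseSemigroup (S : Type*) extends Semigroup S, Inv S where
  mul_inv_mul : ∀ a : S, a * a⁻¹ * a = a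
  inv_mul_inv : ∀ a : S, a⁻¹ * a * a⁻¹ = a⁻¹
  idem_comm : ∀ e f : S, e * e = e → f * f = f → e * f = f * e

/-- The natural partial order on an inverse semigroup: `a ≤ b` iff `a = b * e`
for some idempotent `e`. -/
def natLe {S : Type*} [InverseSemigroup S] (a b : S) : Prop :=
  ∃ e : S, e * e = e ∧ a = b * e

/-- A prehomomorphism between inverse semigroups. -/
def IsPrehom {S T : Type*} [InverseSemigroup S] [InverseSemigroup T] (θ : S → T) : Prop :=
  ∀ s t : S, natLe (θ (s * t)) (θ s * θ t)

namespace StmtAux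

variable {M : Type*} [InverseSemigroup M]

lemma mii (a : M) : a * a⁻¹ * a = a := InverseSemigroup.mul_inv_mul a
lemma imi (a : M) : a⁻¹ * a * a⁻¹ = a⁻¹ := InverseSemigroup.inv_mul_inv a
lemma icomm {e f : M} (he : e * e = e) (hf : f * f = f) : e * f = f * e :=
  InverseSemigroup.idem_comm e f he hf

lemma idem_mi (a : M) : (a * a⁻¹) * (a * a⁻¹) = a * a⁻¹ := by
  calc (a * a⁻¹) * (a * a⁻¹) = a * (a⁻¹ * a * a⁻¹) := by simp only [mul_assoc]
    _ = a * a⁻¹ := by rw [imi]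

lemma idem_im (a : M) : (a⁻¹ * a) * (a⁻¹ * a) = a⁻¹ * a := by
  calc (a⁻¹ * a) * (a⁻¹ * a) = a⁻¹ * (a * a⁻¹ * a) := by simp only [mul_assoc]
    _ = a⁻¹ * a := by rw [mii]

lemma inv_unique {a x : M} (h1 : a * x * a = a) (h2 : x * a * x = x) : x = a⁻¹ := by
  have hxa : (x * a) * (x * a) = x * a := by
    calc (x * a) * (x * a) = x * (a * x * a) := by simp only [mul_assoc]
      _ = x * a := by rw [h1]
  have hax : (a * x) * (a * x) = a * x := by
    calc (a * x) * (a * x) = (a * x * a) * x := by simp only [mul_assoc]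
      _ = a * x := by rw [h1]
  have e1 : x = a⁻¹ * (a * x) := by
    calc x = x * a * x := h2.symm
      _ = x * (a * a⁻¹ * a) * x := by rw [mii]
      _ = ((x * a) * (a⁻¹ * a)) * x := by simp only [mul_assoc]
      _ = ((a⁻¹ * a) * (x * a)) * x := by rw [icomm hxa (idem_im a)]
      _ = a⁻¹ * ((a * x * a) * x) := by simp only [mul_assoc]
      _ = a⁻¹ * (a * x) := by rw [h1]
  have e2 : a⁻¹ = a⁻¹ * (a * x) := by
    calc a⁻¹ = a⁻¹ * a * a⁻¹ := (imi a).symm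
      _ = a⁻¹ * (a * x * a) * a⁻¹ := by rw [h1]
      _ = a⁻¹ * ((a * x) * (a * a⁻¹)) := by simp only [mul_assoc]
      _ = a⁻¹ * ((a * a⁻¹) * (a * x)) := by rw [icomm hax (idem_mi a)]
      _ = (a⁻¹ * a * a⁻¹) * (a * x) := by simp only [mul_assoc]
      _ = a⁻¹ * (a * x) := by rw [imi]
  exact e1.trans e2.symm

lemma inv_inv' (a : M) : a⁻¹⁻¹ = a := (inv_unique (imi a) (mii a)).symm

lemma idem_inv {e : M} (he : e * e = e) : e⁻¹ = e := by
  have h : e * e * e = e := by rw [he, he]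
  exact (inv_unique h h).symm

lemma mul_inv_rev' (a b : M) : (a * b)⁻¹ = b⁻¹ * a⁻¹ := by
  have h1 : (a * b) * (b⁻¹ * a⁻¹) * (a * b) = a * b := by
    calc (a * b) * (b⁻¹ * a⁻¹) * (a * b) = a * ((b * b⁻¹) * (a⁻¹ * a)) * b := by
          simp only [mul_assoc]
      _ = a * ((a⁻¹ * a) * (b * b⁻¹)) * b := by rw [icomm (idem_mi b) (idem_im a)]
      _ = (a * a⁻¹ * a) * (b * b⁻¹ * b) := by simp only [mul_assoc]
      _ = a * b := by rw [mii, mii]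
  have h2 : (b⁻¹ * a⁻¹) * (a * b) * (b⁻¹ * a⁻¹) = b⁻¹ * a⁻¹ := by
    calc (b⁻¹ * a⁻¹) * (a * b) * (b⁻¹ * a⁻¹)
        = b⁻¹ * ((a⁻¹ * a) * (b * b⁻¹)) * a⁻¹ := by simp only [mul_assoc]
      _ = b⁻¹ * ((b * b⁻¹) * (a⁻¹ * a)) * a⁻¹ := by rw [icomm (idem_im a) (idem_mi b)]
      _ = (b⁻¹ * b * b⁻¹) * (a⁻¹ * a * a⁻¹) := by simp only [mul_assoc]
      _ = b⁻¹ * a⁻¹ := by rw [imi, imi]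
  exact (inv_unique h1 h2).symm

lemma natLe_refl (a : M) : natLe a a :=
  ⟨a⁻¹ * a, idem_im a, by rw [← mul_assoc, mii]⟩

lemma natLe_mul_right {a b : M} (h : natLe a b) (c : M) : natLe (a * c) (b * c) := by
  obtain ⟨e, he, rfl⟩ := h
  refine ⟨c⁻¹ * e * c, ?_, ?_⟩
  · calc (c⁻¹ * e * c) * (c⁻¹ * e * c)
        = c⁻¹ * (e * (c * c⁻¹)) * (e * c) := by simp only [mul_assoc]
      _ = c⁻¹ * ((c * c⁻¹) * e) * (e * c) := by rw [icomm he (idem_mi c)]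
      _ = (c⁻¹ * c * c⁻¹) * (e * e * c) := by simp only [mul_assoc]
      _ = c⁻¹ * e * c := by rw [imi, he, ← mul_assoc]
  · calc b * e * c = b * e * (c * c⁻¹ * c) := by rw [mii]
      _ = b * (e * (c * c⁻¹)) * c := by simp only [mul_assoc]
      _ = b * ((c * c⁻¹) * e) * c := by rw [icomm he (idem_mi c)]
      _ = b * c * (c⁻¹ * e * c) := by simp only [mul_assoc]

lemma natLe_mul_left {a b : M} (h : natLe a b) (c : M) : natLe (c * a) (c * b) := by
  obtain ⟨e, he, rfl⟩ := h
  exact ⟨e, he, (mul_assoc c b e).symm⟩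

lemma natLe_idem_mul {e : M} (he : e * e = e) (t : M) : natLe (e * t) t := by
  refine ⟨t⁻¹ * e * t, ?_, ?_⟩
  · calc (t⁻¹ * e * t) * (t⁻¹ * e * t)
        = t⁻¹ * (e * (t * t⁻¹)) * (e * t) := by simp only [mul_assoc]
      _ = t⁻¹ * ((t * t⁻¹) * e) * (e * t) := by rw [icomm he (idem_mi t)]
      _ = (t⁻¹ * t * t⁻¹) * (e * e * t) := by simp only [mul_assoc]
      _ = t⁻¹ * e * t := by rw [imi, he, ← mul_assoc]
  · calc e * t = e * (t * t⁻¹ * t) := by rw [mii]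
      _ = (e * (t * t⁻¹)) * t := by simp only [mul_assoc]
      _ = ((t * t⁻¹) * e) * t := by rw [icomm he (idem_mi t)]
      _ = t * (t⁻¹ * e * t) := by simp only [mul_assoc]

lemma natLe_mul_idem {e : M} (he : e * e = e) (t : M) : natLe (t * e) t :=
  ⟨e, he, rfl⟩

lemma natLe_trans {a b c : M} (h1 : natLe a b) (h2 : natLe b c) : natLe a c := by
  obtain ⟨f, hf, rfl⟩ := h1
  obtain ⟨e, he, rfl⟩ := h2
  refine ⟨e * f, ?_, mul_assoc c e f⟩
  calc (e * f) * (e * f) = e * (f * e) * f := by simp only [mul_assoc]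
    _ = e * (e * f) * f := by rw [icomm hf he]
    _ = (e * e) * (f * f) := by simp only [mul_assoc]
    _ = e * f := by rw [he, hf]

lemma natLe_eq_right {a b : M} (h : natLe a b) : a = b * (a⁻¹ * a) := by
  obtain ⟨e, he, rfl⟩ := h
  have hinv : (b * e)⁻¹ = e * b⁻¹ := by rw [mul_inv_rev', idem_inv he]
  calc b * e = (b * b⁻¹ * b) * (e * e) := by rw [mii, he]
    _ = b * ((b⁻¹ * b) * e) * e := by simp only [mul_assoc]
    _ = b * (e * (b⁻¹ * b)) * e := by rw [icomm (idem_im b) he]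
    _ = b * ((e * b⁻¹) * (b * e)) := by simp only [mul_assoc]
    _ = b * ((b * e)⁻¹ * (b * e)) := by rw [hinv]

lemma natLe_eq_left {a b : M} (h : natLe a b) : a = a * a⁻¹ * b := by
  obtain ⟨e, he, rfl⟩ := h
  have hinv : (b * e)⁻¹ = e * b⁻¹ := by rw [mul_inv_rev', idem_inv he]
  calc b * e = (b * b⁻¹ * b) * e := by rw [mii]
    _ = b * ((b⁻¹ * b) * e) := by simp only [mul_assoc]
    _ = b * (e * (b⁻¹ * b)) := by rw [icomm (idem_im b) he]
    _ = b * ((e * e) * (b⁻¹ * b)) := by rw [he]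
    _ = ((b * e) * (e * b⁻¹)) * b := by simp only [mul_assoc]
    _ = (b * e) * (b * e)⁻¹ * b := by rw [hinv]

lemma natLe_antisymm {a b : M} (h1 : natLe a b) (h2 : natLe b a) : a = b := by
  have e1 : a = b * (a⁻¹ * a) := natLe_eq_right h1
  have e2 : b = b * b⁻¹ * a := natLe_eq_left h2
  calc a = b * (a⁻¹ * a) := e1
    _ = (b * b⁻¹ * b) * (a⁻¹ * a) := by rw [mii]
    _ = b * b⁻¹ * (b * (a⁻¹ * a)) := by simp only [mul_assoc]
    _ = b * b⁻¹ * a := by rw [← e1]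
    _ = b := e2.symm

lemma natLe_inv {a b : M} (h : natLe a b) : natLe a⁻¹ b⁻¹ := by
  obtain ⟨e, he, rfl⟩ := h
  rw [mul_inv_rev', idem_inv he]
  exact natLe_idem_mul he b⁻¹

lemma idem_of_natLe_sq {x : M} (h : natLe x (x * x)) : x * x = x := by
  have e1 : x = x * x⁻¹ * (x * x) := natLe_eq_left h
  calc x * x = (x * x⁻¹ * x) * x := by rw [mii]
    _ = x * x⁻¹ * (x * x) := by simp only [mul_assoc]
    _ = x := e1.symm

lemma absorb_right {a e : M} (he : e * e = e) (h : natLe a (a * e)) : a * e = a := by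
  obtain ⟨f, hf, hf2⟩ := h
  calc a * e = (a * e * f) * e := by rw [← hf2]
    _ = a * (e * (f * e)) := by simp only [mul_assoc]
    _ = a * (e * (e * f)) := by rw [icomm hf he]
    _ = a * (e * e) * f := by simp only [mul_assoc]
    _ = a * e * f := by rw [he]
    _ = a := hf2.symm

lemma absorb_left {a e : M} (he : e * e = e) (h : natLe a (e * a)) : e * a = a := by
  have h2 : a = e * a * (a⁻¹ * a) := natLe_eq_right h
  have : a = e * a := by
    calc a = e * a * (a⁻¹ * a) := h2
      _ = e * (a * a⁻¹ * a) := by simp only [mul_assoc]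
      _ = e * a := by rw [mii]
  exact this.symm

lemma natLe_mul_inv_self {c d : M} (h : natLe c d) : c * (d⁻¹ * d) = c := by
  obtain ⟨e, he, rfl⟩ := h
  calc d * e * (d⁻¹ * d) = d * (e * (d⁻¹ * d)) := by simp only [mul_assoc]
    _ = d * ((d⁻¹ * d) * e) := by rw [icomm he (idem_im d)]
    _ = (d * (d⁻¹ * d)) * e := by simp only [mul_assoc]
    _ = d * e := by rw [← mul_assoc, mii]

end StmtAux

open StmtAux in
theorem stmt5 {S T : Type*} [InverseSemigroup S] [InverseSemigroup T] (θ : S → T) :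
    IsPrehom θ ↔
      ((∀ x y : S, x⁻¹ * x = y * y⁻¹ →
          (θ x)⁻¹ * θ x = θ y * (θ y)⁻¹ ∧ θ (x * y) = θ x * θ y) ∧
       (∀ a b : S, natLe a b → natLe (θ a) (θ b))) := by
  constructor
  · intro hθ
    -- θ maps idempotents to idempotents
    have hidem : ∀ e : S, e * e = e → θ e * θ e = θ e := by
      intro e he
      have := hθ e e
      rw [he] at this
      exact idem_of_natLe_sq this
    -- θ preserves inverses
    have hinv : ∀ s : S, θ s⁻¹ = (θ s)⁻¹ := by
      intro s
      set a := θ s with ha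
      set b := θ s⁻¹ with hb
      have h1 : natLe a (a * b * a) := by
        have k1 : natLe (θ (s * s⁻¹)) (a * b) := hθ s s⁻¹
        have k2 : natLe (θ (s * s⁻¹ * s)) (θ (s * s⁻¹) * a) := hθ (s * s⁻¹) s
        rw [mii] at k2
        exact natLe_trans k2 (natLe_mul_right k1 a)
      have h2 : natLe b (b * a * b) := by
        have k1 : natLe (θ (s⁻¹ * s)) (b * a) := hθ s⁻¹ s
        have k2 : natLe (θ (s⁻¹ * s * s⁻¹)) (θ (s⁻¹ * s) * b) := hθ (s⁻¹ * s) s⁻¹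
        rw [imi] at k2
        exact natLe_trans k2 (natLe_mul_right k1 b)
      -- a * b and b * a are idempotent
      have hab : (a * b) * (a * b) = a * b := by
        apply idem_of_natLe_sq
        have := natLe_mul_right h1 b
        rw [show a * b * a * b = (a * b) * (a * b) by simp only [mul_assoc]] at this
        exact this
      have hba : (b * a) * (b * a) = b * a := by
        apply idem_of_natLe_sq
        have := natLe_mul_right h2 a
        rw [show b * a * b * a = (b * a) * (b * a) by simp only [mul_assoc]] at this
        exact this
      have hbainv : b * a = a⁻¹ * b⁻¹ := by
        rw [← idem_inv hba, mul_inv_rev']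
      have habinv : a * b = b⁻¹ * a⁻¹ := by
        rw [← idem_inv hab, mul_inv_rev']
      have le1 : natLe a b⁻¹ := by
        have : a * b * a = (a * a⁻¹) * b⁻¹ := by
          rw [mul_assoc, hbainv, ← mul_assoc]
        rw [this] at h1
        exact natLe_trans h1 (natLe_idem_mul (idem_mi a) b⁻¹)
      have le2 : natLe b a⁻¹ := by
        have : b * a * b = (b * b⁻¹) * a⁻¹ := by
          rw [mul_assoc, habinv, ← mul_assoc]
        rw [this] at h2
        exact natLe_trans h2 (natLe_idem_mul (idem_mi b) a⁻¹)
      have le3 : natLe a⁻¹ b := by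
        have := natLe_inv le1
        rwa [inv_inv'] at this
      exact natLe_antisymm le2 le3
    refine ⟨?_, ?_⟩
    · intro x y hxy
      set a := θ x with ha
      set b := θ y with hb
      set c := θ (x * y) with hc
      have hx : (x * y) * y⁻¹ = x := by
        rw [mul_assoc, ← hxy, ← mul_assoc, mii]
      have hy : x⁻¹ * (x * y) = y := by
        rw [← mul_assoc, hxy, mii]
      have h1 : natLe a (c * b⁻¹) := by
        have := hθ (x * y) y⁻¹
        rw [hx, hinv] at this
        exact this
      have h2 : natLe b (a⁻¹ * c) := by
        have := hθ x⁻¹ (x * y)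
        rw [hy, hinv] at this
        exact this
      have h3 : natLe c (a * b) := hθ x y
      -- a = a * (b * b⁻¹)
      have ea : a * (b * b⁻¹) = a := by
        apply absorb_right (idem_mi b)
        have k : natLe (c * b⁻¹) (a * (b * b⁻¹)) := by
          have := natLe_mul_right h3 b⁻¹
          rw [mul_assoc] at this
          exact this
        exact natLe_trans h1 k
      have eb : (a⁻¹ * a) * b = b := by
        have k := natLe_mul_left h3 a⁻¹
        rw [← mul_assoc] at k
        exact absorb_left (idem_im a) (natLe_trans h2 k)
      have part1 : a⁻¹ * a = b * b⁻¹ := by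
        calc a⁻¹ * a = a⁻¹ * (a * (b * b⁻¹)) := by rw [ea]
          _ = (a⁻¹ * a) * (b * b⁻¹) := by rw [mul_assoc]
          _ = ((a⁻¹ * a) * b) * b⁻¹ := by simp only [mul_assoc]
          _ = b * b⁻¹ := by rw [eb]
      have part2 : c = a * b := by
        refine natLe_antisymm h3 ?_
        have k1 : natLe (a * b) (c * (b⁻¹ * b)) := by
          have := natLe_mul_right h1 b
          rw [mul_assoc] at this
          exact this
        have k2 : c * ((a * b)⁻¹ * (a * b)) = c := natLe_mul_inv_self h3
        have k3 : (a * b)⁻¹ * (a * b) = b⁻¹ * b := by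
          rw [mul_inv_rev']
          calc b⁻¹ * a⁻¹ * (a * b) = b⁻¹ * ((a⁻¹ * a) * b) := by simp only [mul_assoc]
            _ = b⁻¹ * ((b * b⁻¹) * b) := by rw [part1]
            _ = b⁻¹ * b := by rw [mii]
        rw [k3] at k2
        rw [k2] at k1
        exact k1
      exact ⟨part1, part2⟩
    · intro p q hpq
      obtain ⟨e, he, rfl⟩ := hpq
      have h1 : natLe (θ (q * e)) (θ q * θ e) := hθ q e
      have h2 : natLe (θ q * θ e) (θ q) := natLe_mul_idem (hidem e he) (θ q)
      exact natLe_trans h1 h2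
  · rintro ⟨hres, hmono⟩
    intro s t
    set e := (s⁻¹ * s) * (t * t⁻¹) with hedef
    have hes : e * (s⁻¹ * s) = e := by
      calc e * (s⁻¹ * s) = (s⁻¹ * s) * ((t * t⁻¹) * (s⁻¹ * s)) := by rw [hedef]; simp only [mul_assoc]
        _ = (s⁻¹ * s) * ((s⁻¹ * s) * (t * t⁻¹)) := by rw [icomm (idem_mi t) (idem_im s)]
        _ = ((s⁻¹ * s) * (s⁻¹ * s)) * (t * t⁻¹) := by simp only [mul_assoc]
        _ = e := by rw [idem_im s, hedef]
    have het : e * (t * t⁻¹) = e := by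
      calc e * (t * t⁻¹) = (s⁻¹ * s) * ((t * t⁻¹) * (t * t⁻¹)) := by rw [hedef]; simp only [mul_assoc]
        _ = e := by rw [idem_mi t, hedef]
    have hee : e * e = e := by
      calc e * e = (e * (s⁻¹ * s)) * (t * t⁻¹) := by rw [hedef]; simp only [mul_assoc]
        _ = e * (t * t⁻¹) := by rw [hes]
        _ = e := het
    set x := s * e with hxdef
    set y := e * t with hydef
    have hxinv : x⁻¹ * x = e := by
      rw [hxdef, mul_inv_rev', idem_inv hee]
      calc e * s⁻¹ * (s * e) = e * (s⁻¹ * s) * e := by simp only [mul_assoc]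
        _ = e * e := by rw [hes]
        _ = e := hee
    have hyinv : y * y⁻¹ = e := by
      rw [hydef, mul_inv_rev', idem_inv hee]
      calc e * t * (t⁻¹ * e) = e * (t * t⁻¹) * e := by simp only [mul_assoc]
        _ = e * e := by rw [het]
        _ = e := hee
    have hxy : x * y = s * t := by
      calc x * y = s * (e * e) * t := by rw [hxdef, hydef]; simp only [mul_assoc]
        _ = s * ((s⁻¹ * s) * (t * t⁻¹)) * t := by rw [hee, hedef]
        _ = (s * s⁻¹ * s) * (t * t⁻¹ * t) := by simp only [mul_assoc]
        _ = s * t := by rw [mii, mii]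
    have hprod : θ (x * y) = θ x * θ y := (hres x y (hxinv.trans hyinv.symm)).2
    have hlex : natLe (θ x) (θ s) := hmono x s ⟨e, hee, rfl⟩
    have hley : natLe (θ y) (θ t) := hmono y t (natLe_idem_mul hee t)
    rw [← hxy, hprod]
    exact natLe_trans (natLe_mul_right hlex (θ y)) (natLe_mul_left hley (θ s))
end

section
/- A prehomomorphism θ : S → T between inverse semigroups is a semigroup homomorphism if and only if θ(ef) = θ(e)θ(f) for all idempotents e, f of S. -/
namespace ISGaux

variable {S : Type*} [InverseSemigroup S]

lemma mim (a : S) : a * a⁻¹ * a = a := InverseSemigroup.mul_inv_mul a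
lemma imi (a : S) : a⁻¹ * a * a⁻¹ = a⁻¹ := InverseSemigroup.inv_mul_inv a
lemma comm {e f : S} (he : e * e = e) (hf : f * f = f) : e * f = f * e :=
  InverseSemigroup.idem_comm e f he hf

lemma ii_idem (a : S) : (a⁻¹ * a) * (a⁻¹ * a) = a⁻¹ * a := by
  rw [mul_assoc a⁻¹ a, ← mul_assoc a a⁻¹ a, mim]

lemma ii_idem' (a : S) : (a * a⁻¹) * (a * a⁻¹) = a * a⁻¹ := by
  rw [mul_assoc a a⁻¹, ← mul_assoc a⁻¹ a a⁻¹, imi]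

lemma idem_mul {e f : S} (he : e * e = e) (hf : f * f = f) : (e * f) * (e * f) = e * f := by
  rw [mul_assoc, ← mul_assoc f e f, comm hf he, mul_assoc e f f, hf, ← mul_assoc, he]

lemma inv_eq_of {a x : S} (h1 : a * x * a = a) (h2 : x * a * x = x) : x = a⁻¹ := by
  have hxa : (x * a) * (x * a) = x * a := by
    rw [← mul_assoc, h2]
  have hax : (a * x) * (a * x) = a * x := by
    rw [← mul_assoc, h1]
  have e1 : x = x * (a * a⁻¹) := by
    conv_lhs => rw [← h2]
    rw [show x * a * x = x * (a * x) from mul_assoc _ _ _]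
    conv_lhs => rw [← mim a]
    calc x * (a * a⁻¹ * a * x) = x * ((a * a⁻¹) * (a * x)) := by rw [mul_assoc (a*a⁻¹)]
    _ = x * ((a * x) * (a * a⁻¹)) := by rw [comm (ii_idem' a) hax]
    _ = (x * a * x) * (a * a⁻¹) := by simp only [mul_assoc]
    _ = x * (a * a⁻¹) := by rw [h2]
  have e2 : a⁻¹ = x * (a * a⁻¹) := by
    conv_lhs => rw [← imi a]
    conv_lhs => rw [show a⁻¹ * a * a⁻¹ = a⁻¹ * a * a⁻¹ from rfl]
    have : a⁻¹ * a = a⁻¹ * (a * x * a) := by rw [h1]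
    calc a⁻¹ * a * a⁻¹ = a⁻¹ * (a * x * a) * a⁻¹ := by rw [h1]
    _ = ((a⁻¹ * a) * (x * a)) * a⁻¹ := by simp only [mul_assoc]
    _ = ((x * a) * (a⁻¹ * a)) * a⁻¹ := by rw [comm (ii_idem a) hxa]
    _ = x * (a * a⁻¹ * a) * a⁻¹ := by simp only [mul_assoc]
    _ = x * a * a⁻¹ := by rw [mim]
    _ = x * (a * a⁻¹) := mul_assoc _ _ _
  rw [e1, ← e2]

lemma inv_invS (a : S) : a⁻¹⁻¹ = a := (inv_eq_of (imi a) (mim a)).symm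

lemma idem_inv {e : S} (he : e * e = e) : e⁻¹ = e :=
  (inv_eq_of (by rw [he, he]) (by rw [he, he])).symm

lemma mul_inv_revS (a b : S) : (a * b)⁻¹ = b⁻¹ * a⁻¹ := by
  refine (inv_eq_of ?_ ?_).symm
  · calc a * b * (b⁻¹ * a⁻¹) * (a * b) = a * ((b * b⁻¹) * (a⁻¹ * a)) * b := by
          simp only [mul_assoc]
    _ = a * ((a⁻¹ * a) * (b * b⁻¹)) * b := by rw [comm (ii_idem' b) (ii_idem a)]
    _ = (a * a⁻¹ * a) * (b * b⁻¹ * b) := by simp only [mul_assoc]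
    _ = a * b := by rw [mim, mim]
  · calc b⁻¹ * a⁻¹ * (a * b) * (b⁻¹ * a⁻¹) = b⁻¹ * ((a⁻¹ * a) * (b * b⁻¹)) * a⁻¹ := by
          simp only [mul_assoc]
    _ = b⁻¹ * ((b * b⁻¹) * (a⁻¹ * a)) * a⁻¹ := by rw [comm (ii_idem a) (ii_idem' b)]
    _ = (b⁻¹ * b * b⁻¹) * (a⁻¹ * a * a⁻¹) := by simp only [mul_assoc]
    _ = b⁻¹ * a⁻¹ := by rw [imi, imi]

end ISGaux

namespace ISGaux

variable {S : Type*} [InverseSemigroup S]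

lemma natLe_def1 {a b : S} (h : natLe a b) : a = b * (a⁻¹ * a) := by
  obtain ⟨e, he, rfl⟩ := h
  rw [mul_inv_revS, idem_inv he]
  symm
  calc b * (e * b⁻¹ * (b * e)) = b * (e * (((b⁻¹ * b) * e))) := by simp only [mul_assoc]
  _ = b * (((b⁻¹ * b) * e) * e) := by rw [comm he (idem_mul (ii_idem b) he)]
  _ = (b * b⁻¹ * b) * (e * e) := by simp only [mul_assoc]
  _ = b * e := by rw [he, mim]

lemma natLe_def2 {a b : S} (h : natLe a b) : a = (a * a⁻¹) * b := by
  obtain ⟨e, he, rfl⟩ := h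
  rw [mul_inv_revS, idem_inv he]
  symm
  calc b * e * (e * b⁻¹) * b = b * ((e * e) * (b⁻¹ * b)) := by simp only [mul_assoc]
  _ = b * (e * (b⁻¹ * b)) := by rw [he]
  _ = b * ((b⁻¹ * b) * e) := by rw [comm he (ii_idem b)]
  _ = (b * b⁻¹ * b) * e := by simp only [mul_assoc]
  _ = b * e := by rw [mim]

lemma natLe_trans {a b c : S} (h1 : natLe a b) (h2 : natLe b c) : natLe a c := by
  obtain ⟨e, he, rfl⟩ := h1
  obtain ⟨f, hf, rfl⟩ := h2
  exact ⟨f * e, idem_mul hf he, by rw [mul_assoc]⟩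

lemma natLe_mul_left (c : S) {a b : S} (h : natLe a b) : natLe (c * a) (c * b) := by
  obtain ⟨e, he, rfl⟩ := h
  exact ⟨e, he, by rw [mul_assoc]⟩

lemma natLe_mul_right (c : S) {a b : S} (h : natLe a b) : natLe (a * c) (b * c) := by
  obtain ⟨e, he, rfl⟩ := h
  refine ⟨c⁻¹ * (e * c), ?_, ?_⟩
  · calc c⁻¹ * (e * c) * (c⁻¹ * (e * c))
          = c⁻¹ * (e * (((c * c⁻¹) * e) * c)) := by simp only [mul_assoc]
    _ = c⁻¹ * (e * ((e * (c * c⁻¹)) * c)) := by rw [comm (ii_idem' c) he]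
    _ = c⁻¹ * ((e * e) * ((c * c⁻¹) * c)) := by simp only [mul_assoc]
    _ = c⁻¹ * (e * c) := by rw [he, show (c * c⁻¹) * c = c from mim c]
  · symm
    calc (b * c) * (c⁻¹ * (e * c)) = b * (((c * c⁻¹) * e) * c) := by simp only [mul_assoc]
    _ = b * ((e * (c * c⁻¹)) * c) := by rw [comm (ii_idem' c) he]
    _ = b * e * ((c * c⁻¹) * c) := by simp only [mul_assoc]
    _ = b * e * c := by rw [show (c * c⁻¹) * c = c from mim c]

lemma eq_of_natLe_dom {a b : S} (h : natLe a b) (hd : a⁻¹ * a = b⁻¹ * b) : a = b :=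
  calc a = b * (a⁻¹ * a) := natLe_def1 h
  _ = b * (b⁻¹ * b) := by rw [hd]
  _ = b := by rw [← mul_assoc, mim]

lemma eq_of_natLe_ran {a b : S} (h : natLe a b) (hd : a * a⁻¹ = b * b⁻¹) : a = b :=
  calc a = (a * a⁻¹) * b := natLe_def2 h
  _ = (b * b⁻¹) * b := by rw [hd]
  _ = b := mim b

lemma idem_of_natLe_sq {a : S} (h : natLe a (a * a)) : a * a = a := by
  obtain ⟨e, he, hae⟩ := h
  have hae' : a * e = a := by
    calc a * e = (a * a * e) * e := by rw [← hae]
    _ = a * a * (e * e) := by simp only [mul_assoc]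
    _ = a * a * e := by rw [he]
    _ = a := hae.symm
  have hinv : a⁻¹ = e * (a⁻¹ * a⁻¹) := by
    calc a⁻¹ = (a * a * e)⁻¹ := by rw [← hae]
    _ = e⁻¹ * (a * a)⁻¹ := mul_inv_revS _ _
    _ = e * (a⁻¹ * a⁻¹) := by rw [idem_inv he, mul_inv_revS]
  have h3 : a * a⁻¹ = a * a⁻¹ * a⁻¹ := by
    calc a * a⁻¹ = a * (e * (a⁻¹ * a⁻¹)) := by rw [← hinv]
    _ = (a * e) * (a⁻¹ * a⁻¹) := by simp only [mul_assoc]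
    _ = a * (a⁻¹ * a⁻¹) := by rw [hae']
    _ = a * a⁻¹ * a⁻¹ := by simp only [mul_assoc]
  have h4 : a = (a * a⁻¹) * (a⁻¹ * a) := by
    calc a = a * a⁻¹ * a := (mim a).symm
    _ = (a * a⁻¹ * a⁻¹) * a := by rw [← h3]
    _ = (a * a⁻¹) * (a⁻¹ * a) := by simp only [mul_assoc]
  calc a * a = ((a * a⁻¹) * (a⁻¹ * a)) * ((a * a⁻¹) * (a⁻¹ * a)) := by rw [← h4]
  _ = (a * a⁻¹) * (((a⁻¹ * a) * (a * a⁻¹)) * (a⁻¹ * a)) := by simp only [mul_assoc]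
  _ = (a * a⁻¹) * (((a * a⁻¹) * (a⁻¹ * a)) * (a⁻¹ * a)) := by
      rw [comm (ii_idem a) (ii_idem' a)]
  _ = ((a * a⁻¹) * (a * a⁻¹)) * ((a⁻¹ * a) * (a⁻¹ * a)) := by simp only [mul_assoc]
  _ = (a * a⁻¹) * (a⁻¹ * a) := by rw [ii_idem, ii_idem']
  _ = a := h4.symm

lemma sandwich {a x : S} (h : natLe a (a * x * a)) : a = a * x * a := by
  calc a = (a * a⁻¹) * (a * x * a) := natLe_def2 h
  _ = (a * a⁻¹ * a) * (x * a) := by simp only [mul_assoc]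
  _ = a * x * a := by rw [mim]; simp only [mul_assoc]

end ISGaux

namespace ISGaux

variable {S T : Type*} [InverseSemigroup S] [InverseSemigroup T]

lemma idem_le_antisymm {x f : T} (hx : x * x = x) (hf : f * f = f)
    (h1 : natLe f x) (h2 : natLe x (f * x)) : f = x := by
  have hx_eq : x = f * x := by
    calc x = (f * x) * (x⁻¹ * x) := natLe_def1 h2
    _ = (f * x) * x := by rw [idem_inv hx, hx]
    _ = f * (x * x) := by simp only [mul_assoc]
    _ = f * x := by rw [hx]
  have hf_eq : f = x * f := by
    calc f = x * (f⁻¹ * f) := natLe_def1 h1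
    _ = x * f := by rw [idem_inv hf, hf]
  calc f = x * f := hf_eq
  _ = f * x := comm hx hf
  _ = x := hx_eq.symm

lemma idem_le_antisymm' {x f : T} (hx : x * x = x) (hf : f * f = f)
    (h1 : natLe f x) (h2 : natLe x (x * f)) : f = x := by
  have hx_eq : x = x * f := by
    calc x = (x * f) * (x⁻¹ * x) := natLe_def1 h2
    _ = (x * f) * x := by rw [idem_inv hx, hx]
    _ = x * (f * x) := by simp only [mul_assoc]
    _ = x * (x * f) := by rw [comm hf hx]
    _ = (x * x) * f := by simp only [mul_assoc]
    _ = x * f := by rw [hx]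
  have hf_eq : f = x * f := by
    calc f = x * (f⁻¹ * f) := natLe_def1 h1
    _ = x * f := by rw [idem_inv hf, hf]
  rw [hf_eq, ← hx_eq]

variable (θ : S → T) (hθ : IsPrehom θ)
include hθ

lemma prehom_idem {e : S} (he : e * e = e) : θ e * θ e = θ e := by
  have h := hθ e e
  rw [he] at h
  exact idem_of_natLe_sq h

lemma prehom_fix1 (a : S) : θ a * θ a⁻¹ * θ a = θ a := by
  have h1 : natLe (θ a) (θ a * θ (a⁻¹ * a)) := by
    have h := hθ a (a⁻¹ * a)
    rwa [show a * (a⁻¹ * a) = a from by rw [← mul_assoc, mim]] at h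
  have h3 := natLe_trans h1 (natLe_mul_left (θ a) (hθ a⁻¹ a))
  rw [← mul_assoc] at h3
  exact (sandwich h3).symm

lemma prehom_fix2 (a : S) : θ a⁻¹ * θ a * θ a⁻¹ = θ a⁻¹ := by
  have h1 : natLe (θ a⁻¹) (θ a⁻¹ * θ (a * a⁻¹)) := by
    have h := hθ a⁻¹ (a * a⁻¹)
    rwa [show a⁻¹ * (a * a⁻¹) = a⁻¹ from by rw [← mul_assoc, imi]] at h
  have h3 := natLe_trans h1 (natLe_mul_left (θ a⁻¹) (hθ a a⁻¹))
  rw [← mul_assoc] at h3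
  exact (sandwich h3).symm

lemma prehom_inv (a : S) : θ a⁻¹ = (θ a)⁻¹ :=
  inv_eq_of (prehom_fix1 θ hθ a) (prehom_fix2 θ hθ a)

lemma prehom_dom (s : S) : θ (s⁻¹ * s) = (θ s)⁻¹ * θ s := by
  have h1 : natLe (θ (s⁻¹ * s)) ((θ s)⁻¹ * θ s) := by
    have h := hθ s⁻¹ s
    rwa [prehom_inv θ hθ s] at h
  have h2 : natLe ((θ s)⁻¹ * θ s) (θ (s⁻¹ * s) * ((θ s)⁻¹ * θ s)) := by
    have h := hθ (s⁻¹ * s) s⁻¹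
    rw [imi] at h
    have h' := natLe_mul_right (θ s) h
    rwa [prehom_inv θ hθ s, mul_assoc] at h'
  exact idem_le_antisymm (ii_idem (θ s)) (prehom_idem θ hθ (ii_idem s)) h1 h2

lemma prehom_ran (s : S) : θ (s * s⁻¹) = θ s * (θ s)⁻¹ := by
  have h1 : natLe (θ (s * s⁻¹)) (θ s * (θ s)⁻¹) := by
    have h := hθ s s⁻¹
    rwa [prehom_inv θ hθ s] at h
  have h2 : natLe (θ s * (θ s)⁻¹) (θ s * (θ s)⁻¹ * θ (s * s⁻¹)) := by
    have h := hθ s⁻¹ (s * s⁻¹)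
    rw [show s⁻¹ * (s * s⁻¹) = s⁻¹ from by rw [← mul_assoc, imi]] at h
    have h' := natLe_mul_left (θ s) h
    rwa [prehom_inv θ hθ s, ← mul_assoc] at h'
  exact idem_le_antisymm' (ii_idem' (θ s)) (prehom_idem θ hθ (ii_idem' s)) h1 h2

end ISGaux

namespace ISGaux

section Sonly
variable {S : Type*} [InverseSemigroup S]

lemma conj_dom {s g : S} (hg : g * g = g) (hge : g * (s⁻¹ * s) = g) :
    (s * g)⁻¹ * (s * g) = g := by
  calc (s * g)⁻¹ * (s * g) = g * ((s⁻¹ * s) * g) := by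
        rw [mul_inv_revS, idem_inv hg]; simp only [mul_assoc]
  _ = (g * (s⁻¹ * s)) * g := by simp only [mul_assoc]
  _ = g := by rw [hge, hg]

lemma conj_ran {t g : S} (hg : g * g = g) (hgf : g * (t * t⁻¹) = g) :
    (g * t) * (g * t)⁻¹ = g := by
  calc (g * t) * (g * t)⁻¹ = g * ((t * t⁻¹) * g) := by
        rw [mul_inv_revS, idem_inv hg]; simp only [mul_assoc]
  _ = (g * (t * t⁻¹)) * g := by simp only [mul_assoc]
  _ = g := by rw [hgf, hg]

end Sonly

variable {S T : Type*} [InverseSemigroup S] [InverseSemigroup T]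
variable (θ : S → T) (hθ : IsPrehom θ)
include hθ

lemma stepC {p q : S} (hpp : p⁻¹ * p = q * q⁻¹) : θ (p * q) = θ p * θ q := by
  apply eq_of_natLe_dom (hθ p q)
  have hdom : (p * q)⁻¹ * (p * q) = q⁻¹ * q := by
    calc (p * q)⁻¹ * (p * q) = q⁻¹ * ((p⁻¹ * p) * q) := by
          rw [mul_inv_revS]; simp only [mul_assoc]
    _ = q⁻¹ * ((q * q⁻¹) * q) := by rw [hpp]
    _ = q⁻¹ * q := by rw [show (q * q⁻¹) * q = q from mim q]
  calc (θ (p * q))⁻¹ * θ (p * q) = θ ((p * q)⁻¹ * (p * q)) := (prehom_dom θ hθ (p * q)).symm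
  _ = θ (q⁻¹ * q) := by rw [hdom]
  _ = (θ q)⁻¹ * θ q := prehom_dom θ hθ q
  _ = ((θ q)⁻¹ * θ q * (θ q)⁻¹) * θ q := by rw [imi]
  _ = (θ q)⁻¹ * ((θ q * (θ q)⁻¹) * θ q) := by simp only [mul_assoc]
  _ = (θ q)⁻¹ * (θ (q * q⁻¹) * θ q) := by rw [prehom_ran θ hθ q]
  _ = (θ q)⁻¹ * (θ (p⁻¹ * p) * θ q) := by rw [hpp]
  _ = (θ q)⁻¹ * (((θ p)⁻¹ * θ p) * θ q) := by rw [prehom_dom θ hθ p]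
  _ = (θ p * θ q)⁻¹ * (θ p * θ q) := by rw [mul_inv_revS]; simp only [mul_assoc]

variable (H : ∀ e f : S, e * e = e → f * f = f → θ (e * f) = θ e * θ f)
include H

lemma stepA {s g : S} (hg : g * g = g) (hge : g * (s⁻¹ * s) = g) :
    θ (s * g) = θ s * θ g := by
  apply eq_of_natLe_dom (hθ s g)
  have hrhs : (θ s * θ g)⁻¹ * (θ s * θ g) = θ g := by
    calc (θ s * θ g)⁻¹ * (θ s * θ g) = ((θ g)⁻¹ * (θ s)⁻¹) * (θ s * θ g) := by
          rw [mul_inv_revS]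
    _ = θ g * (((θ s)⁻¹ * θ s) * θ g) := by
          rw [idem_inv (prehom_idem θ hθ hg)]; simp only [mul_assoc]
    _ = θ g * (θ (s⁻¹ * s) * θ g) := by rw [prehom_dom θ hθ s]
    _ = (θ g * θ (s⁻¹ * s)) * θ g := by simp only [mul_assoc]
    _ = θ (g * (s⁻¹ * s)) * θ g := by rw [H g (s⁻¹ * s) hg (ii_idem s)]
    _ = θ g * θ g := by rw [hge]
    _ = θ g := prehom_idem θ hθ hg
  rw [hrhs, ← prehom_dom θ hθ (s * g), conj_dom hg hge]

lemma stepB {t g : S} (hg : g * g = g) (hgf : g * (t * t⁻¹) = g) :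
    θ (g * t) = θ g * θ t := by
  apply eq_of_natLe_ran (hθ g t)
  have hrhs : (θ g * θ t) * (θ g * θ t)⁻¹ = θ g := by
    calc (θ g * θ t) * (θ g * θ t)⁻¹ = (θ g * θ t) * ((θ t)⁻¹ * (θ g)⁻¹) := by
          rw [mul_inv_revS]
    _ = θ g * ((θ t * (θ t)⁻¹) * θ g) := by
          rw [idem_inv (prehom_idem θ hθ hg)]; simp only [mul_assoc]
    _ = θ g * (θ (t * t⁻¹) * θ g) := by rw [prehom_ran θ hθ t]
    _ = (θ g * θ (t * t⁻¹)) * θ g := by simp only [mul_assoc]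
    _ = θ (g * (t * t⁻¹)) * θ g := by rw [H g (t * t⁻¹) hg (ii_idem' t)]
    _ = θ g * θ g := by rw [hgf]
    _ = θ g := prehom_idem θ hθ hg
  rw [hrhs, ← prehom_ran θ hθ (g * t), conj_ran hg hgf]

lemma key (s t : S) : θ (s * t) = θ s * θ t := by
  have he : (s⁻¹ * s) * (s⁻¹ * s) = s⁻¹ * s := ii_idem s
  have hf : (t * t⁻¹) * (t * t⁻¹) = t * t⁻¹ := ii_idem' t
  have hg : ((s⁻¹ * s) * (t * t⁻¹)) * ((s⁻¹ * s) * (t * t⁻¹)) = (s⁻¹ * s) * (t * t⁻¹) :=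
    idem_mul he hf
  have hge : ((s⁻¹ * s) * (t * t⁻¹)) * (s⁻¹ * s) = (s⁻¹ * s) * (t * t⁻¹) := by
    calc ((s⁻¹ * s) * (t * t⁻¹)) * (s⁻¹ * s)
        = (s⁻¹ * s) * ((t * t⁻¹) * (s⁻¹ * s)) := by simp only [mul_assoc]
    _ = (s⁻¹ * s) * ((s⁻¹ * s) * (t * t⁻¹)) := by rw [comm hf he]
    _ = ((s⁻¹ * s) * (s⁻¹ * s)) * (t * t⁻¹) := by simp only [mul_assoc]
    _ = (s⁻¹ * s) * (t * t⁻¹) := by rw [he]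
  have hgf : ((s⁻¹ * s) * (t * t⁻¹)) * (t * t⁻¹) = (s⁻¹ * s) * (t * t⁻¹) := by
    calc ((s⁻¹ * s) * (t * t⁻¹)) * (t * t⁻¹)
        = (s⁻¹ * s) * ((t * t⁻¹) * (t * t⁻¹)) := by simp only [mul_assoc]
    _ = (s⁻¹ * s) * (t * t⁻¹) := by rw [hf]
  have hA := stepA θ hθ H hg hge
  have hB := stepB θ hθ H hg hgf
  have hC := stepC θ hθ (p := s * ((s⁻¹ * s) * (t * t⁻¹))) (q := ((s⁻¹ * s) * (t * t⁻¹)) * t)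
    ((conj_dom hg hge).trans (conj_ran hg hgf).symm)
  have hpq : (s * ((s⁻¹ * s) * (t * t⁻¹))) * (((s⁻¹ * s) * (t * t⁻¹)) * t) = s * t := by
    calc (s * ((s⁻¹ * s) * (t * t⁻¹))) * (((s⁻¹ * s) * (t * t⁻¹)) * t)
        = s * ((((s⁻¹ * s) * (t * t⁻¹)) * ((s⁻¹ * s) * (t * t⁻¹))) * t) := by
          simp only [mul_assoc]
    _ = s * (((s⁻¹ * s) * (t * t⁻¹)) * t) := by rw [hg]
    _ = (s * s⁻¹ * s) * ((t * t⁻¹) * t) := by simp only [mul_assoc]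
    _ = s * t := by rw [mim, show (t * t⁻¹) * t = t from mim t]
  calc θ (s * t) = θ ((s * ((s⁻¹ * s) * (t * t⁻¹))) * (((s⁻¹ * s) * (t * t⁻¹)) * t)) := by
        rw [hpq]
  _ = θ (s * ((s⁻¹ * s) * (t * t⁻¹))) * θ (((s⁻¹ * s) * (t * t⁻¹)) * t) := hC
  _ = (θ s * θ ((s⁻¹ * s) * (t * t⁻¹))) * (θ ((s⁻¹ * s) * (t * t⁻¹)) * θ t) := by
        rw [hA, hB]
  _ = θ s * ((θ ((s⁻¹ * s) * (t * t⁻¹)) * θ ((s⁻¹ * s) * (t * t⁻¹))) * θ t) := by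
        simp only [mul_assoc]
  _ = θ s * (θ ((s⁻¹ * s) * (t * t⁻¹)) * θ t) := by rw [prehom_idem θ hθ hg]
  _ = θ s * ((θ (s⁻¹ * s) * θ (t * t⁻¹)) * θ t) := by rw [H _ _ he hf]
  _ = θ s * ((((θ s)⁻¹ * θ s) * (θ t * (θ t)⁻¹)) * θ t) := by
        rw [prehom_dom θ hθ s, prehom_ran θ hθ t]
  _ = (θ s * ((θ s)⁻¹ * θ s)) * ((θ t * (θ t)⁻¹) * θ t) := by simp only [mul_assoc]
  _ = θ s * θ t := by
        rw [show θ s * ((θ s)⁻¹ * θ s) = θ s from by rw [← mul_assoc, mim],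
          show (θ t * (θ t)⁻¹) * θ t = θ t from mim (θ t)]

end ISGaux


theorem stmt6 {S T : Type*} [InverseSemigroup S] [InverseSemigroup T]
    (θ : S → T) (hθ : IsPrehom θ) :
    (∀ s t : S, θ (s * t) = θ s * θ t) ↔
      (∀ e f : S, e * e = e → f * f = f → θ (e * f) = θ e * θ f) := by
  constructor
  · intro h e f _ _
    exact h e f
  · intro H s t
    exact ISGaux.key θ hθ H s t
end

section
/- In an ordered groupoid, if z ≤ xy where the composite xy exists, then there exist x' ≤ x and y' ≤ y such that the composite x'y' exists and z = x'y'. -/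
/-- An algebraic groupoid: a type with an everywhere-defined multiplication which is
only required to behave well on composable pairs (`d x = r y`), together with
inversion and domain/range maps (valued in the identities of the groupoid). -/
class Groupoid' (G : Type*) where
  mul : G → G → G
  inv : G → G
  d : G → G
  r : G → G
  r_d : ∀ x : G, r (d x) = d x
  d_r : ∀ x : G, d (r x) = r x
  mul_assoc : ∀ x y z : G, d x = r y → d y = r z → mul (mul x y) z = mul x (mul y z)
  d_mul : ∀ x y : G, d x = r y → d (mul x y) = d y
  r_mul : ∀ x y : G, d x = r y → r (mul x y) = r x
  mul_d : ∀ x : G, mul x (d x) = x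
  r_mul_cancel : ∀ x : G, mul (r x) x = x
  mul_inv : ∀ x : G, mul x (inv x) = r x
  inv_mul : ∀ x : G, mul (inv x) x = d x
  d_inv : ∀ x : G, d (inv x) = r x
  r_inv : ∀ x : G, r (inv x) = d x

open Groupoid'

/-- An element is an identity of the groupoid if it is its own domain. -/
def IsId {G : Type*} [Groupoid' G] (e : G) : Prop := d e = e

/-- An ordered groupoid: axioms (OG1), (OG2) and (OG3) (restriction exists uniquely). -/
class OrderedGroupoid (G : Type*) [Groupoid' G] [PartialOrder G] : Prop where
  og1 : ∀ x y : G, x ≤ y → inv x ≤ inv y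
  og2 : ∀ x y u v : G, x ≤ y → u ≤ v → d x = r u → d y = r v → mul x u ≤ mul y v
  og3 : ∀ x e : G, IsId e → e ≤ d x → ∃! z : G, z ≤ x ∧ d z = e

theorem stmt9 {G : Type*} [Groupoid' G] [PartialOrder G] [OrderedGroupoid G]
    (x y z : G) (hxy : d x = r y) (hz : z ≤ mul x y) :
    ∃ x' y' : G, x' ≤ x ∧ y' ≤ y ∧ d x' = r y' ∧ z = mul x' y' := by

  classical
  -- inv is involutive
  have inv_inv : ∀ a : G, inv (inv a) = a := by
    intro a
    have h1 : mul a (mul (inv a) (inv (inv a))) = mul a (mul (inv a) a) := by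
      rw [mul_inv (inv a), inv_mul a, r_inv, mul_d]
    rw [← mul_assoc a (inv a) (inv (inv a)) (by rw [r_inv]) (by rw [d_inv, r_inv, d_inv]),
        ← mul_assoc a (inv a) a (by rw [r_inv]) (by rw [d_inv])] at h1
    rw [Groupoid'.mul_inv a] at h1
    have hr : r (inv (inv a)) = r a := by rw [r_inv, d_inv]
    calc inv (inv a) = mul (r (inv (inv a))) (inv (inv a)) := (r_mul_cancel _).symm
      _ = mul (r a) (inv (inv a)) := by rw [hr]
      _ = mul (r a) a := h1
      _ = a := r_mul_cancel a
  -- r is monotone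
  have hrz : r z ≤ r x := by
    have := OrderedGroupoid.og2 z (mul x y) (inv z) (inv (mul x y)) hz
      (OrderedGroupoid.og1 _ _ hz) (by rw [r_inv]) (by rw [r_inv])
    rw [Groupoid'.mul_inv, Groupoid'.mul_inv, r_mul x y hxy] at this
    exact this
  have hId : IsId (r z) := by unfold IsId; rw [d_r]
  obtain ⟨w, ⟨hwle, hwd⟩, _⟩ := OrderedGroupoid.og3 (inv x) (r z) hId (by rw [d_inv]; exact hrz)
  refine ⟨inv w, mul w z, ?_, ?_, ?_, ?_⟩
  · have := OrderedGroupoid.og1 _ _ hwle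
    rwa [inv_inv] at this
  · have h := OrderedGroupoid.og2 w (inv x) z (mul x y) hwle hz (by rw [hwd])
      (by rw [d_inv, r_mul x y hxy])
    rwa [← mul_assoc (inv x) x y (by rw [d_inv]) hxy, inv_mul, hxy, r_mul_cancel] at h
  · rw [d_inv, r_mul w z (by rw [hwd])]
  · rw [← mul_assoc (inv w) w z (by rw [d_inv]) (by rw [hwd]), inv_mul, hwd, r_mul_cancel]
end

section
/- Let G be a groupoid with a partial order ≤. Then G is an ordered groupoid (satisfies (OG1),(OG2),(OG3)) if and only if it satisfies (OG1), (OG2), (OI): the identities form an order ideal, and (OG4): for each x and identity e ≤ d(x) there exists y ≤ x with d(y) = e. -/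
open Groupoid'

theorem stmt13 {G : Type*} [Groupoid' G] [PartialOrder G] :
    ((∀ x y : G, x ≤ y → inv x ≤ inv y) ∧
     (∀ x y u v : G, x ≤ y → u ≤ v → d x = r u → d y = r v → mul x u ≤ mul y v) ∧
     (∀ x e : G, IsId e → e ≤ d x → ∃! z : G, z ≤ x ∧ d z = e))
    ↔
    ((∀ x y : G, x ≤ y → inv x ≤ inv y) ∧
     (∀ x y u v : G, x ≤ y → u ≤ v → d x = r u → d y = r v → mul x u ≤ mul y v) ∧
     (∀ x e : G, IsId e → x ≤ e → IsId x) ∧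
     (∀ x e : G, IsId e → e ≤ d x → ∃ z : G, z ≤ x ∧ d z = e)) := by

  constructor
  · rintro ⟨h1, h2, h3⟩
    refine ⟨h1, h2, ?_, fun x e he hle => (h3 x e he hle).exists⟩
    intro x e he hle
    have re : r e = e := by rw [← he, r_d, he]
    have dd : ∀ y : G, d (d y) = d y := fun y => by rw [← r_d y]; exact d_r _
    have hinv_e : inv e = e := by
      have h := mul_d (inv e)
      rw [d_inv, re] at h
      rw [← h, inv_mul, he]
    have hixe : inv x ≤ e := hinv_e ▸ h1 x e hle
    have hmul : mul (inv x) x ≤ mul e e :=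
      h2 (inv x) e x e hixe hle (d_inv x) (he.trans re.symm)
    rw [inv_mul] at hmul
    have hee : mul e e = e := by have h := mul_d e; rwa [he] at h
    rw [hee] at hmul
    have hle2 : d x ≤ d e := by rw [he]; exact hmul
    have huniq := h3 e (d x) (dd x) hle2
    have hx : x = d x := huniq.unique ⟨hle, rfl⟩ ⟨hmul, dd x⟩
    exact hx.symm
  · rintro ⟨h1, h2, hOI, h4⟩
    refine ⟨h1, h2, fun x e he hle => ?_⟩
    obtain ⟨z, hz, hdz⟩ := h4 x e he hle
    refine ⟨z, ⟨hz, hdz⟩, ?_⟩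
    rintro z' ⟨hz', hdz'⟩
    have hcomp : d z' = r (inv z) := by rw [r_inv, hdz, hdz']
    have ha_le : mul z' (inv z) ≤ mul x (inv x) :=
      h2 z' x (inv z) (inv x) hz' (h1 z x hz) hcomp (r_inv x).symm
    rw [Groupoid'.mul_inv] at ha_le
    have ha_id : IsId (mul z' (inv z)) := hOI _ (r x) (d_r x) ha_le
    have ha : mul z' (inv z) = r z := by
      rw [← ha_id, d_mul _ _ hcomp, d_inv]
    calc z' = mul z' (d z') := (mul_d z').symm
      _ = mul z' (mul (inv z) z) := by rw [inv_mul, hdz, hdz']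
      _ = mul (mul z' (inv z)) z := (mul_assoc _ _ _ hcomp (by rw [d_inv])).symm
      _ = z := by rw [ha, r_mul_cancel]
end

section
/- In an ordered groupoid G, for x, y ∈ G the pseudoproduct x ⊗ y = (x|e)(e|y) with e = d(x) ∧ r(y) exists if and only if the set ⟨x,y⟩ = {(x',y') : d(x') = r(y'), x' ≤ x, y' ≤ y} has a maximum element (x'',y''), and in that case x ⊗ y = x''y''. -/
open Groupoid'
open scoped Classical

/-- The restriction `(x | e)` of `x` to an identity `e ≤ d x`: the unique element
below `x` with domain `e` (junk value `x` if undefined). -/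
noncomputable def res {G : Type*} [Groupoid' G] [PartialOrder G] [OrderedGroupoid G]
    (x e : G) : G :=
  if h : IsId e ∧ e ≤ d x then
    Classical.choose (OrderedGroupoid.og3 x e h.1 h.2).exists
  else x

/-- The corestriction `(e | x)` of `x` to an identity `e ≤ r x`. -/
noncomputable def cores {G : Type*} [Groupoid' G] [PartialOrder G] [OrderedGroupoid G]
    (e x : G) : G :=
  inv (res (inv x) e)

section Aux

variable {G : Type*} [Groupoid' G] [PartialOrder G] [OrderedGroupoid G]

lemma isId_d (x : G) : IsId (d x) := by
  have h := d_mul x (d x) (r_d x).symm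
  rw [mul_d] at h
  exact h.symm

lemma isId_r (x : G) : IsId (r x) := d_r x

lemma inv_inv' (x : G) : inv (inv x) = x := by
  have h1 : inv (inv x) = mul (r (inv (inv x))) (inv (inv x)) := (r_mul_cancel _).symm
  rw [r_inv, d_inv, ← mul_inv x,
    mul_assoc x (inv x) (inv (inv x)) (r_inv x).symm (r_inv (inv x)).symm,
    Groupoid'.mul_inv (inv x), r_inv, mul_d] at h1
  exact h1

lemma d_mono {x y : G} (h : x ≤ y) : d x ≤ d y := by
  have := OrderedGroupoid.og2 (inv x) (inv y) x y (OrderedGroupoid.og1 _ _ h) h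
    (d_inv x) (d_inv y)
  rwa [inv_mul, inv_mul] at this

lemma r_mono {x y : G} (h : x ≤ y) : r x ≤ r y := by
  have := OrderedGroupoid.og2 x y (inv x) (inv y) h (OrderedGroupoid.og1 _ _ h)
    (r_inv x).symm (r_inv y).symm
  rwa [Groupoid'.mul_inv, Groupoid'.mul_inv] at this

lemma res_spec {x e : G} (he : IsId e) (hle : e ≤ d x) :
    res x e ≤ x ∧ d (res x e) = e := by
  rw [res, dif_pos (⟨he, hle⟩ : IsId e ∧ e ≤ d x)]
  exact Classical.choose_spec (OrderedGroupoid.og3 x e he hle).exists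

lemma res_unique {x e z : G} (he : IsId e) (hle : e ≤ d x) (hz : z ≤ x) (hd : d z = e) :
    z = res x e := by
  obtain ⟨w, _, hu⟩ := OrderedGroupoid.og3 x e he hle
  rw [hu z ⟨hz, hd⟩, hu (res x e) ⟨(res_spec he hle).1, (res_spec he hle).2⟩]

lemma res_mono_id {x e f : G} (he : IsId e) (hf : IsId f) (hef : f ≤ e) (hle : e ≤ d x) :
    res x f ≤ res x e := by
  have h1 := res_spec he hle
  have hfd : f ≤ d (res x e) := by rw [h1.2]; exact hef
  have h2 := res_spec hf hfd
  have h3 : res (res x e) f = res x f :=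
    res_unique hf (le_trans hef hle) (le_trans h2.1 h1.1) h2.2
  rw [← h3]
  exact h2.1

lemma cores_spec {y e : G} (he : IsId e) (hle : e ≤ r y) :
    cores e y ≤ y ∧ r (cores e y) = e := by
  have hle' : e ≤ d (inv y) := (d_inv y).symm ▸ hle
  have h := res_spec he hle'
  constructor
  · have := OrderedGroupoid.og1 _ _ h.1
    rwa [inv_inv'] at this
  · rw [cores, r_inv, h.2]

lemma cores_unique {y e w : G} (he : IsId e) (hle : e ≤ r y) (hw : w ≤ y) (hr : r w = e) :
    w = cores e y := by
  have hle' : e ≤ d (inv y) := (d_inv y).symm ▸ hle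
  have h1 : inv w ≤ inv y := OrderedGroupoid.og1 _ _ hw
  have h2 : d (inv w) = e := by rw [d_inv, hr]
  have h3 : inv w = res (inv y) e := res_unique he hle' h1 h2
  rw [cores, ← h3, inv_inv']

lemma cores_mono_id {y e f : G} (he : IsId e) (hf : IsId f) (hef : f ≤ e) (hle : e ≤ r y) :
    cores f y ≤ cores e y := by
  have hle' : e ≤ d (inv y) := (d_inv y).symm ▸ hle
  exact OrderedGroupoid.og1 _ _ (res_mono_id he hf hef hle')

/-- If `e` is the maximum identity below `d x` and `r y`, then every composable pair
below `(x, y)` is below `(res x e, cores e y)`. -/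
lemma pair_le {x y e : G} (he : IsId e) (hedx : e ≤ d x) (hery : e ≤ r y)
    (hmax : ∀ f : G, IsId f → f ≤ d x → f ≤ r y → f ≤ e)
    {q : G × G} (hq : d q.1 = r q.2 ∧ q.1 ≤ x ∧ q.2 ≤ y) :
    q.1 ≤ res x e ∧ q.2 ≤ cores e y := by
  obtain ⟨hdr, hq1, hq2⟩ := hq
  have hfid : IsId (d q.1) := isId_d q.1
  have hfdx : d q.1 ≤ d x := d_mono hq1
  have hfry : d q.1 ≤ r y := by rw [hdr]; exact r_mono hq2
  have hfe : d q.1 ≤ e := hmax _ hfid hfdx hfry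
  constructor
  · have h1 : q.1 = res x (d q.1) := res_unique hfid hfdx hq1 rfl
    rw [h1]
    exact res_mono_id he hfid hfe hedx
  · have h2 : q.2 = cores (d q.1) y := cores_unique hfid hfry hq2 hdr.symm
    rw [h2]
    exact cores_mono_id he hfid hfe hery

end Aux

theorem stmt14 {G : Type*} [Groupoid' G] [PartialOrder G] [OrderedGroupoid G] (x y : G) :
    ((∃ e : G, IsId e ∧ e ≤ d x ∧ e ≤ r y ∧
        ∀ f : G, IsId f → f ≤ d x → f ≤ r y → f ≤ e) ↔
      (∃ p : G × G, (d p.1 = r p.2 ∧ p.1 ≤ x ∧ p.2 ≤ y) ∧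
        ∀ q : G × G, (d q.1 = r q.2 ∧ q.1 ≤ x ∧ q.2 ≤ y) → q.1 ≤ p.1 ∧ q.2 ≤ p.2)) ∧
    ∀ (e : G) (p : G × G),
      (IsId e ∧ e ≤ d x ∧ e ≤ r y ∧
        ∀ f : G, IsId f → f ≤ d x → f ≤ r y → f ≤ e) →
      ((d p.1 = r p.2 ∧ p.1 ≤ x ∧ p.2 ≤ y) ∧
        ∀ q : G × G, (d q.1 = r q.2 ∧ q.1 ≤ x ∧ q.2 ≤ y) → q.1 ≤ p.1 ∧ q.2 ≤ p.2) →
      mul (res x e) (cores e y) = mul p.1 p.2 := by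
  constructor
  · constructor
    · rintro ⟨e, he, hedx, hery, hmax⟩
      refine ⟨(res x e, cores e y), ⟨?_, (res_spec he hedx).1, (cores_spec he hery).1⟩, ?_⟩
      · simp only
        rw [(res_spec he hedx).2, (cores_spec he hery).2]
      · intro q hq
        exact pair_le he hedx hery hmax hq
    · rintro ⟨p, ⟨hdr, hp1, hp2⟩, hmax⟩
      refine ⟨d p.1, isId_d p.1, d_mono hp1, hdr ▸ r_mono hp2, ?_⟩
      intro f hf hfdx hfry
      have hq : d (res x f) = r (cores f y) ∧ res x f ≤ x ∧ cores f y ≤ y :=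
        ⟨by rw [(res_spec hf hfdx).2, (cores_spec hf hfry).2],
          (res_spec hf hfdx).1, (cores_spec hf hfry).1⟩
      have := (hmax (res x f, cores f y) hq).1
      have h2 : f ≤ d p.1 := by
        have h3 := d_mono this
        rwa [(res_spec hf hfdx).2] at h3
      exact h2
  · rintro e p ⟨he, hedx, hery, hemax⟩ ⟨⟨hdr, hp1, hp2⟩, hpmax⟩
    have h1 : p.1 ≤ res x e ∧ p.2 ≤ cores e y :=
      pair_le he hedx hery hemax ⟨hdr, hp1, hp2⟩
    have h2 := hpmax (res x e, cores e y)
      ⟨by rw [(res_spec he hedx).2, (cores_spec he hery).2],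
        (res_spec he hedx).1, (cores_spec he hery).1⟩
    have e1 : res x e = p.1 := le_antisymm h2.1 h1.1
    have e2 : cores e y = p.2 := le_antisymm h2.2 h1.2
    rw [e1, e2]
end

section
/- Let G be a group acting on a partially ordered set X by order automorphisms and Y ⊆ X a McAlister triple (G,X,Y): Y is an order ideal of X and a meet-semilattice, G·Y = X, and g·Y ∩ Y ≠ ∅ for all g ∈ G. Then for (e,g),(f,h) ∈ P(G,X,Y) = {(y,g) ∈ Y × G : g⁻¹·y ∈ Y}, the meet e ∧ (g·f) exists in X and (e ∧ g·f, gh) ∈ P(G,X,Y). -/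
variable {G X : Type*}

/-- Membership in `P(G,X,Y)`: pairs `(y,g)` with `y ∈ Y` and `g⁻¹ • y ∈ Y`. -/
def MemP [Group G] [MulAction G X] (Y : Set X) (p : X × G) : Prop :=
  p.1 ∈ Y ∧ p.2⁻¹ • p.1 ∈ Y

theorem stmt17 [Group G] [PartialOrder X] [MulAction G X]
    (hact : ∀ (g : G) (x y : X), x ≤ y ↔ g • x ≤ g • y)
    (Y : Set X)
    (hMT1a : ∀ x y : X, y ∈ Y → x ≤ y → x ∈ Y)
    (hMT1b : ∀ a ∈ Y, ∀ b ∈ Y, ∃ m ∈ Y, m ≤ a ∧ m ≤ b ∧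
        ∀ c ∈ Y, c ≤ a → c ≤ b → c ≤ m)
    (hMT2 : ∀ x : X, ∃ (g : G) (y : X), y ∈ Y ∧ x = g • y)
    (hMT3 : ∀ g : G, ∃ y ∈ Y, g • y ∈ Y)
    (e f : X) (g h : G)
    (hpe : MemP Y (e, g)) (hpf : MemP Y (f, h)) :
    ∃ m : X, IsGLB {e, g • f} m ∧ MemP Y (m, g * h) := by
  obtain ⟨he, hge⟩ := hpe
  obtain ⟨hf, hhf⟩ := hpf
  obtain ⟨m', hm'Y, hm'a, hm'f, hm'glb⟩ := hMT1b (g⁻¹ • e) hge f hf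
  refine ⟨g • m', ⟨?_, ?_⟩, ?_, ?_⟩
  · rintro x (rfl | rfl)
    · have := (hact g _ _).mp hm'a
      simpa using this
    · exact (hact g _ _).mp hm'f
  · intro c hc
    have hce : c ≤ e := hc (Set.mem_insert _ _)
    have hcgf : c ≤ g • f := hc (Set.mem_insert_of_mem _ rfl)
    have h1 : g⁻¹ • c ≤ g⁻¹ • e := (hact g⁻¹ _ _).mp hce
    have h2 : g⁻¹ • c ≤ f := by
      have := (hact g⁻¹ _ _).mp hcgf; simpa using this
    have hcY : g⁻¹ • c ∈ Y := hMT1a _ _ hge h1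
    have := (hact g _ _).mp (hm'glb _ hcY h1 h2)
    simpa using this
  · refine hMT1a _ e he ?_
    have := (hact g _ _).mp hm'a
    simpa using this
  · have : (g * h)⁻¹ • g • m' = h⁻¹ • m' := by
      rw [mul_inv_rev, mul_smul, inv_smul_smul]
    rw [this]
    exact hMT1a _ _ hhf ((hact h⁻¹ _ _).mp hm'f)
end

section
/- Let (G,X,Y) be a McAlister triple. Then P(G,X,Y) = {(y,g) ∈ Y × G : g⁻¹·y ∈ Y} with multiplication (e,g)(f,h) = (e ∧ g·f, gh) is an E-unitary inverse semigroup whose idempotents are {(e,1) : e ∈ Y}. -/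
variable {G X : Type*}

section Helpers
variable [Group G] [PartialOrder X] [MulAction G X]

lemma smul_isGLB_pair (hact : ∀ (g : G) (x y : X), x ≤ y ↔ g • x ≤ g • y)
    (g : G) {x y a : X} (h : IsGLB ({x, y} : Set X) a) :
    IsGLB ({g • x, g • y} : Set X) (g • a) := by
  constructor
  · rintro z hz
    simp only [Set.mem_insert_iff, Set.mem_singleton_iff] at hz
    rcases hz with rfl | rfl
    · exact (hact g a x).1 (h.1 (by simp))
    · exact (hact g a y).1 (h.1 (by simp))
  · intro z hz
    have hzx : z ≤ g • x := hz (by simp)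
    have hzy : z ≤ g • y := hz (by simp)
    have h1 : g⁻¹ • z ≤ x := by
      have := (hact g⁻¹ z (g • x)).1 hzx
      simpa using this
    have h2 : g⁻¹ • z ≤ y := by
      have := (hact g⁻¹ z (g • y)).1 hzy
      simpa using this
    have h3 : g⁻¹ • z ≤ a := h.2 (by
      rintro w hw
      simp only [Set.mem_insert_iff, Set.mem_singleton_iff] at hw
      rcases hw with rfl | rfl
      exacts [h1, h2])
    have := (hact g _ _).1 h3
    simpa using this

lemma glb_assoc {a b c x w : X} (h1 : IsGLB ({a, b} : Set X) x)
    (h2 : IsGLB ({x, c} : Set X) w) : IsGLB ({a, b, c} : Set X) w := by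
  have hwx : w ≤ x := h2.1 (by simp)
  constructor
  · rintro z hz
    simp only [Set.mem_insert_iff, Set.mem_singleton_iff] at hz
    rcases hz with rfl | rfl | rfl
    · exact hwx.trans (h1.1 (by simp))
    · exact hwx.trans (h1.1 (by simp))
    · exact h2.1 (by simp)
  · intro z hz
    have hza : z ≤ a := hz (by simp)
    have hzb : z ≤ b := hz (by simp)
    have hzc : z ≤ c := hz (by simp)
    have hzx : z ≤ x := h1.2 (by
      rintro u hu
      simp only [Set.mem_insert_iff, Set.mem_singleton_iff] at hu
      rcases hu with rfl | rfl
      exacts [hza, hzb])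
    exact h2.2 (by
      rintro u hu
      simp only [Set.mem_insert_iff, Set.mem_singleton_iff] at hu
      rcases hu with rfl | rfl
      exacts [hzx, hzc])

lemma glb_assoc' {a b c y w : X} (h1 : IsGLB ({b, c} : Set X) y)
    (h2 : IsGLB ({a, y} : Set X) w) : IsGLB ({a, b, c} : Set X) w := by
  have hwy : w ≤ y := h2.1 (by simp)
  constructor
  · rintro z hz
    simp only [Set.mem_insert_iff, Set.mem_singleton_iff] at hz
    rcases hz with rfl | rfl | rfl
    · exact h2.1 (by simp)
    · exact hwy.trans (h1.1 (by simp))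
    · exact hwy.trans (h1.1 (by simp))
  · intro z hz
    have hza : z ≤ a := hz (by simp)
    have hzb : z ≤ b := hz (by simp)
    have hzc : z ≤ c := hz (by simp)
    have hzy : z ≤ y := h1.2 (by
      rintro u hu
      simp only [Set.mem_insert_iff, Set.mem_singleton_iff] at hu
      rcases hu with rfl | rfl
      exacts [hzb, hzc])
    exact h2.2 (by
      rintro u hu
      simp only [Set.mem_insert_iff, Set.mem_singleton_iff] at hu
      rcases hu with rfl | rfl
      exacts [hza, hzy])

end Helpers

theorem stmt18 [Group G] [PartialOrder X] [MulAction G X]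
    (hact : ∀ (g : G) (x y : X), x ≤ y ↔ g • x ≤ g • y)
    (Y : Set X)
    (hMT1a : ∀ x y : X, y ∈ Y → x ≤ y → x ∈ Y)
    (hMT1b : ∀ a ∈ Y, ∀ b ∈ Y, ∃ m ∈ Y, m ≤ a ∧ m ≤ b ∧
        ∀ c ∈ Y, c ≤ a → c ≤ b → c ≤ m)
    (hMT2 : ∀ x : X, ∃ (g : G) (y : X), y ∈ Y ∧ x = g • y)
    (hMT3 : ∀ g : G, ∃ y ∈ Y, g • y ∈ Y)
    (m : X × G → X × G → X × G)
    (hm : ∀ p q : X × G, MemP Y p → MemP Y q →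
      IsGLB {p.1, p.2 • q.1} (m p q).1 ∧ (m p q).2 = p.2 * q.2) :
    -- closure under the multiplication
    (∀ p q : X × G, MemP Y p → MemP Y q → MemP Y (m p q)) ∧
    -- associativity
    (∀ p q t : X × G, MemP Y p → MemP Y q → MemP Y t →
      m (m p q) t = m p (m q t)) ∧
    -- the inverse of (e,g) is (g⁻¹ • e, g⁻¹)
    (∀ p : X × G, MemP Y p →
      MemP Y (p.2⁻¹ • p.1, p.2⁻¹) ∧
      m (m p (p.2⁻¹ • p.1, p.2⁻¹)) p = p ∧
      m (m (p.2⁻¹ • p.1, p.2⁻¹) p) (p.2⁻¹ • p.1, p.2⁻¹) = (p.2⁻¹ • p.1, p.2⁻¹)) ∧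
    -- idempotents commute
    (∀ p q : X × G, MemP Y p → MemP Y q → m p p = p → m q q = q →
      m p q = m q p) ∧
    -- the idempotents are exactly the pairs (e,1) with e ∈ Y
    (∀ p : X × G, MemP Y p → (m p p = p ↔ p.1 ∈ Y ∧ p.2 = 1)) ∧
    -- E-unitary: anything above an idempotent (in the natural partial order) is idempotent
    (∀ p e f : X × G, MemP Y p → MemP Y e → MemP Y f →
      m e e = e → m f f = f → e = m p f → m p p = p) := by
  -- closure
  have hclosed : ∀ p q : X × G, MemP Y p → MemP Y q → MemP Y (m p q) := by
    intro p q hp hq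
    obtain ⟨hglb, hsnd⟩ := hm p q hp hq
    constructor
    · exact hMT1a _ p.1 hp.1 (hglb.1 (by simp))
    · rw [hsnd]
      have hle : (m p q).1 ≤ p.2 • q.1 := hglb.1 (by simp)
      have h1 : (p.2 * q.2)⁻¹ • (m p q).1 ≤ (p.2 * q.2)⁻¹ • (p.2 • q.1) :=
        (hact _ _ _).1 hle
      have h2 : (p.2 * q.2)⁻¹ • (p.2 • q.1) = q.2⁻¹ • q.1 := by
        rw [mul_inv_rev, mul_smul, inv_smul_smul]
      rw [h2] at h1
      exact hMT1a _ _ hq.2 h1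
  -- idempotent characterization
  have hidem : ∀ p : X × G, MemP Y p → (m p p = p ↔ p.1 ∈ Y ∧ p.2 = 1) := by
    intro p hp
    obtain ⟨hglb, hsnd⟩ := hm p p hp hp
    constructor
    · intro h
      refine ⟨hp.1, ?_⟩
      have hs := congrArg Prod.snd h
      rw [hsnd] at hs
      exact mul_eq_right.mp hs
    · rintro ⟨h1, h2⟩
      have hset : ({p.1, p.2 • p.1} : Set X) = {p.1} := by
        rw [h2, one_smul]; simp
      rw [hset] at hglb
      exact Prod.ext (hglb.unique isGLB_singleton) (by rw [hsnd, h2, one_mul])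
  refine ⟨hclosed, ?_, ?_, ?_, hidem, ?_⟩
  · -- associativity
    intro p q t hp hq ht
    have hpq := hclosed p q hp hq
    have hqt := hclosed q t hq ht
    obtain ⟨g1, s1⟩ := hm p q hp hq
    obtain ⟨g2, s2⟩ := hm (m p q) t hpq ht
    obtain ⟨g3, s3⟩ := hm q t hq ht
    obtain ⟨g4, s4⟩ := hm p (m q t) hp hqt
    have L : IsGLB ({p.1, p.2 • q.1, p.2 • (q.2 • t.1)} : Set X) (m (m p q) t).1 := by
      rw [s1, mul_smul] at g2
      exact glb_assoc g1 g2
    have R : IsGLB ({p.1, p.2 • q.1, p.2 • (q.2 • t.1)} : Set X) (m p (m q t)).1 :=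
      glb_assoc' (smul_isGLB_pair hact p.2 g3) g4
    refine Prod.ext (L.unique R) ?_
    rw [s2, s4, s1, s3, mul_assoc]
  · -- inverses
    intro p hp
    have hp' : MemP Y (p.2⁻¹ • p.1, p.2⁻¹) := ⟨hp.2, by simpa using hp.1⟩
    refine ⟨hp', ?_, ?_⟩
    · obtain ⟨g1, s1⟩ := hm p _ hp hp'
      have e1 : m p (p.2⁻¹ • p.1, p.2⁻¹) = (p.1, 1) := by
        have hset : ({p.1, p.2 • ((p.2⁻¹ • p.1, p.2⁻¹) : X × G).1} : Set X) = {p.1} := by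
          simp [smul_inv_smul]
        rw [hset] at g1
        exact Prod.ext (g1.unique isGLB_singleton) (by rw [s1]; simp)
      rw [e1]
      have hy1 : MemP Y ((p.1, 1) : X × G) := ⟨hp.1, by simpa using hp.1⟩
      obtain ⟨g2, s2⟩ := hm (p.1, 1) p hy1 hp
      have hset : ({((p.1, 1) : X × G).1, ((p.1, 1) : X × G).2 • p.1} : Set X) = {p.1} := by
        simp
      rw [hset] at g2
      exact Prod.ext (g2.unique isGLB_singleton) (by rw [s2]; simp)
    · obtain ⟨g1, s1⟩ := hm _ p hp' hp
      have e1 : m (p.2⁻¹ • p.1, p.2⁻¹) p = (p.2⁻¹ • p.1, 1) := by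
        have hset : ({((p.2⁻¹ • p.1, p.2⁻¹) : X × G).1,
            ((p.2⁻¹ • p.1, p.2⁻¹) : X × G).2 • p.1} : Set X) = {p.2⁻¹ • p.1} := by
          simp
        rw [hset] at g1
        exact Prod.ext (g1.unique isGLB_singleton) (by rw [s1]; simp)
      rw [e1]
      have hy1 : MemP Y ((p.2⁻¹ • p.1, 1) : X × G) := ⟨hp.2, by simpa using hp.2⟩
      obtain ⟨g2, s2⟩ := hm (p.2⁻¹ • p.1, 1) _ hy1 hp'
      have hset : ({((p.2⁻¹ • p.1, 1) : X × G).1,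
          ((p.2⁻¹ • p.1, 1) : X × G).2 • ((p.2⁻¹ • p.1, p.2⁻¹) : X × G).1} : Set X)
          = {p.2⁻¹ • p.1} := by simp
      rw [hset] at g2
      exact Prod.ext (g2.unique isGLB_singleton) (by rw [s2]; simp)
  · -- idempotents commute
    intro p q hp hq hpp hqq
    obtain ⟨hpY, hp1⟩ := (hidem p hp).1 hpp
    obtain ⟨hqY, hq1⟩ := (hidem q hq).1 hqq
    obtain ⟨g1, s1⟩ := hm p q hp hq
    obtain ⟨g2, s2⟩ := hm q p hq hp
    rw [hp1, one_smul] at g1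
    rw [hq1, one_smul, Set.pair_comm] at g2
    exact Prod.ext (g1.unique g2) (by rw [s1, s2, hp1, hq1])
  · -- E-unitary
    intro p e f hp he hf hee hff heq
    obtain ⟨-, he1⟩ := (hidem e he).1 hee
    obtain ⟨-, hf1⟩ := (hidem f hf).1 hff
    have hs : e.2 = p.2 * f.2 := by rw [heq, (hm p f hp hf).2]
    rw [he1, hf1, mul_one] at hs
    exact (hidem p hp).2 ⟨hp.1, hs.symm⟩
end
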